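/- For every positive integer n, ∑_{j=0}^{n−1} j·binom(j+n−1, j) = (n−1)·n·binom(2n−1, n−1)/(n+1). -/
import Mathlib

lemma hockey (m : ℕ) : ∀ M : ℕ, ∑ j ∈ Finset.range M, Nat.choose (j + m) (m + 1) =
    Nat.choose (M + m) (m + 2) := by
  intro M
  induction M with
  | zero => simp [Nat.choose_eq_zero_of_lt]
  | succ M ih =>
      rw [Finset.sum_range_succ, ih, show M + 1 + m = M + m + 1 from by omega,
        Nat.choose_succ_succ' (M + m) (m + 1), Nat.add_comm]

lemma term_eq (m j : ℕ) : j * Nat.choose (j + m) j = (m + 1) * Nat.choose (j + m) (m + 1) := by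
  have h1 : Nat.choose (j + m) j = Nat.choose (j + m) m := by
    have h := Nat.choose_symm (show m ≤ j + m by omega)
    rw [show j + m - m = j from by omega] at h
    exact h
  have h2 := Nat.choose_succ_right_eq (j + m) m
  rw [show j + m - m = j from by omega] at h2
  rw [h1, mul_comm j, mul_comm (m + 1)]
  exact h2.symm

lemma key (m : ℕ) : ∑ j ∈ Finset.range (m + 1), j * Nat.choose (j + m) j =
    (m + 1) * Nat.choose (2 * m + 1) (m + 2) := by
  calc ∑ j ∈ Finset.range (m + 1), j * Nat.choose (j + m) j
      = ∑ j ∈ Finset.range (m + 1), (m + 1) * Nat.choose (j + m) (m + 1) :=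
        Finset.sum_congr rfl fun j _ => term_eq m j
    _ = (m + 1) * ∑ j ∈ Finset.range (m + 1), Nat.choose (j + m) (m + 1) := by
        rw [Finset.mul_sum]
    _ = (m + 1) * Nat.choose (2 * m + 1) (m + 2) := by
        rw [hockey m (m + 1)]; ring_nf

lemma ratio (m : ℕ) : (m + 2) * Nat.choose (2 * m + 1) (m + 2) = m * Nat.choose (2 * m + 1) m := by
  have h1 := Nat.choose_succ_right_eq (2 * m + 1) (m + 1)
  rw [show 2 * m + 1 - (m + 1) = m from by omega, show m + 1 + 1 = m + 2 from rfl,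
    Nat.choose_symm_half] at h1
  rw [mul_comm, h1, mul_comm]

/-- For every positive integer `n`,
`∑_{j=0}^{n−1} j·binom(j+n−1, j) = (n−1)·n·binom(2n−1, n−1)/(n+1)`. -/
theorem stmt7 (n : ℕ) (hn : 0 < n) :
    ∑ j ∈ Finset.range n, (j : ℚ) * (Nat.choose (j + n - 1) j : ℚ) =
      ((n : ℚ) - 1) * n * (Nat.choose (2 * n - 1) (n - 1) : ℚ) / ((n : ℚ) + 1) := by
  obtain ⟨m, rfl⟩ : ∃ m, n = m + 1 := ⟨n - 1, by omega⟩
  have e1 : ∀ j, j + (m + 1) - 1 = j + m := by intro j; omega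
  have e2 : 2 * (m + 1) - 1 = 2 * m + 1 := by omega
  have e3 : m + 1 - 1 = m := by omega
  simp only [e1, e2, e3]
  have hsum : ∑ j ∈ Finset.range (m + 1), (j : ℚ) * (Nat.choose (j + m) j : ℚ)
      = ((m : ℚ) + 1) * (Nat.choose (2 * m + 1) (m + 2) : ℚ) := by
    exact_mod_cast key m
  rw [hsum]
  have hr : ((m : ℚ) + 2) * (Nat.choose (2 * m + 1) (m + 2) : ℚ)
      = m * (Nat.choose (2 * m + 1) m : ℚ) := by exact_mod_cast ratio m
  have hne : ((m : ℚ) + 1) + 1 ≠ 0 := by positivity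
  push_cast
  field_simp
  nlinarith [hr]
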